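/- arXiv:1710.07127 — 2 statements merged into one kernel-verified Lean document; each statement's English description precedes it below -/
import Mathlib

section
/- For every positive integer n, ∑_{k=1}^{n} 2^{2k} · (2^{2k} − 1) · C(2n,2k) · B_{2k} = 2n, where C(n,k) denotes the binomial coefficient. -/
section Aux
open Finset PowerSeries

noncomputable def F (t : ℚ) : ℚ⟦X⟧ :=
  PowerSeries.mk fun n => Polynomial.aeval t ((1 / n.factorial : ℚ) • Polynomial.bernoulli n)

noncomputable def E (a : ℚ) : ℚ⟦X⟧ := rescale a (exp ℚ)

lemma hgen (t : ℚ) : F t * (exp ℚ - 1) = X * E t :=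
  Polynomial.bernoulli_generating_function t

lemma hE (a b : ℚ) : E a * E b = E (a + b) := exp_mul_exp_eq_exp_add a b

lemma hE0 : E 0 = 1 := by
  rw [E, rescale_zero]; simp

lemma hres (a t : ℚ) : rescale a (F t) * (E a - 1) = C a * X * E (t * a) := by
  have := congrArg (rescale a) (hgen t)
  rw [map_mul, map_mul, map_sub, map_one, rescale_X] at this
  simp only [E, rescale_rescale] at this ⊢
  rw [this]

lemma Afull :
    (rescale 4 (F 4⁻¹) + rescale (-4) (F 4⁻¹)) * (E 4 - 1)
      = (rescale 2 (F 2⁻¹) + rescale (-2) (F 2⁻¹)) * (E 4 - 1) := by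
  have h1 := hres 4 4⁻¹
  have h2 := hres (-4) 4⁻¹
  have h3 := hres 2 2⁻¹
  have h4 := hres (-2) 2⁻¹
  rw [show (4:ℚ)⁻¹ * 4 = 1 by norm_num] at h1
  rw [show (4:ℚ)⁻¹ * -4 = -1 by norm_num] at h2
  rw [show (2:ℚ)⁻¹ * 2 = 1 by norm_num] at h3
  rw [show (2:ℚ)⁻¹ * -2 = -1 by norm_num] at h4
  have huv : E 1 * E (-1) = 1 := by rw [hE]; norm_num [hE0]
  have r2 : E 2 = E 1 * E 1 := by rw [hE]; norm_num
  have r4 : E 4 = E 1 * E 1 * E 1 * E 1 := by rw [hE, hE, hE]; norm_num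
  have s2 : E (-2) = E (-1) * E (-1) := by rw [hE]; norm_num
  have s4 : E (-4) = E (-1) * E (-1) * E (-1) * E (-1) := by rw [hE, hE, hE]; norm_num
  have hc4 : (C (4 : ℚ) : ℚ⟦X⟧) = C 2 + C 2 := by rw [show (4:ℚ) = 2 + 2 by norm_num, map_add]
  have hc4' : (C (-4 : ℚ) : ℚ⟦X⟧) = -(C 2 + C 2) := by
    rw [show (-4:ℚ) = -(2 + 2) by norm_num, map_neg, map_add]
  have hc2' : (C (-2 : ℚ) : ℚ⟦X⟧) = -(C 2) := by rw [map_neg]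
  rw [s4, hc4'] at h2
  rw [r2] at h3
  rw [s2, hc2'] at h4
  rw [r4, hc4] at h1
  rw [r4]
  set u := E 1
  set v := E (-1)
  set c : ℚ⟦X⟧ := C 2
  set a2 := rescale (-4) (F 4⁻¹)
  set a4 := rescale (-2) (F 2⁻¹)
  linear_combination h1 - u^4*h2 - (u^2+1)*h3 + u^2*(u^2+1)*h4 +
    (a2*(u^3*v^3+u^2*v^2+u*v+1) - a4*(u*v+1)*(u^2+1) + c*X*u*(u^2-1))*huv

lemma AB : (rescale 4 (F 4⁻¹) + rescale (-4) (F 4⁻¹))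
    = (rescale 2 (F 2⁻¹) + rescale (-2) (F 2⁻¹)) := by
  have hne : (E 4 - 1 : ℚ⟦X⟧) ≠ 0 := by
    intro h
    have := congrArg (coeff 1) h
    simp [E, coeff_rescale, coeff_exp] at this
  exact mul_right_cancel₀ hne Afull

lemma key (m : ℕ) :
    ((4:ℚ)^m + (-4:ℚ)^m) * (Polynomial.bernoulli m).eval 4⁻¹
      = ((2:ℚ)^m + (-2:ℚ)^m) * (Polynomial.bernoulli m).eval 2⁻¹ := by
  have := congrArg (coeff m) AB
  simp only [map_add, F, coeff_rescale, coeff_mk, map_smul, smul_eq_mul,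
    Polynomial.aeval_def, Polynomial.eval₂_eq_eval_map, Polynomial.map_id] at this
  have hm : (m.factorial : ℚ) ≠ 0 := Nat.cast_ne_zero.mpr m.factorial_ne_zero
  field_simp at this
  rw [Algebra.algebraMap_self, Polynomial.map_id, one_div, one_div] at this
  linarith [this]

lemma Texp (n : ℕ) (c : ℚ) (hc : c ≠ 0) :
    ∑ i ∈ range (2*n+1), _root_.bernoulli i * ((2*n).choose i : ℚ) * c^i
      = c^(2*n) * (Polynomial.bernoulli (2*n)).eval c⁻¹ := by
  rw [Polynomial.bernoulli, Polynomial.eval_finset_sum, Finset.mul_sum]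
  refine Finset.sum_congr rfl fun i hi => ?_
  rw [Polynomial.eval_monomial]
  have hin : i ≤ 2*n := Nat.lt_succ_iff.mp (Finset.mem_range.mp hi)
  have hpow : c ^ (2*n) * (c ^ (2*n - i))⁻¹ = c ^ i := by
    rw [← pow_sub₀ c hc (Nat.sub_le _ _), Nat.sub_sub_self hin]
  rw [inv_pow]
  linear_combination (-(_root_.bernoulli i * ((2*n).choose i : ℚ))) * hpow

lemma bern_odd (i : ℕ) (h : Odd i) (h1 : 1 < i) : _root_.bernoulli i = 0 := by
  rw [_root_.bernoulli, bernoulli'_eq_zero_of_odd h h1, mul_zero]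

lemma ratmain (n : ℕ) (hn : 0 < n) :
    ∑ k ∈ Icc 1 n, (2:ℚ)^(2*k) * ((2:ℚ)^(2*k) - 1) *
      ((2*n).choose (2*k) : ℚ) * _root_.bernoulli (2*k) = 2*n := by
  set f : ℕ → ℚ := fun i => _root_.bernoulli i * ((2*n).choose i : ℚ) * ((4:ℚ)^i - (2:ℚ)^i)
    with hf
  have hsum : ∑ i ∈ range (2*n+1), f i = 0 := by
    have e4 : (-4:ℚ)^(2*n) = (4:ℚ)^(2*n) := by rw [pow_mul, pow_mul]; norm_num
    have e2 : (-2:ℚ)^(2*n) = (2:ℚ)^(2*n) := by rw [pow_mul, pow_mul]; norm_num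
    have hk := key (2*n)
    rw [e4, e2] at hk
    have : ∑ i ∈ range (2*n+1), f i
        = (∑ i ∈ range (2*n+1), _root_.bernoulli i * ((2*n).choose i : ℚ) * (4:ℚ)^i)
          - ∑ i ∈ range (2*n+1), _root_.bernoulli i * ((2*n).choose i : ℚ) * (2:ℚ)^i := by
      rw [← Finset.sum_sub_distrib]; exact Finset.sum_congr rfl fun i _ => by simp [hf]; ring
    rw [this, Texp n 4 (by norm_num), Texp n 2 (by norm_num)]
    linarith [hk]
  have hs : insert 1 ((Icc 1 n).image (fun k => 2*k)) ⊆ range (2*n+1) := by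
    intro i hi
    simp only [Finset.mem_insert, Finset.mem_image, Finset.mem_Icc] at hi
    rcases hi with rfl | ⟨k, ⟨hk1, hk2⟩, rfl⟩ <;> simp [Finset.mem_range] <;> omega
  have h1ni : (1:ℕ) ∉ (Icc 1 n).image (fun k => 2*k) := by
    simp only [Finset.mem_image, Finset.mem_Icc]
    rintro ⟨k, _, hk⟩; omega
  have hzero : ∀ i ∈ range (2*n+1), i ∉ insert 1 ((Icc 1 n).image (fun k => 2*k)) → f i = 0 := by
    intro i hi his
    simp only [Finset.mem_insert, Finset.mem_image, Finset.mem_Icc, not_or, not_exists] at his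
    obtain ⟨hne1, hnim⟩ := his
    rcases Nat.even_or_odd i with he | ho
    · obtain ⟨k, rfl⟩ := he
      have : ¬(1 ≤ k ∧ k ≤ n) := by
        have := hnim k; intro ⟨hk1, hk2⟩; exact this ⟨⟨hk1, hk2⟩, by ring⟩
      have hk0 : k = 0 := by
        simp only [Finset.mem_range] at hi; omega
      subst hk0; simp [hf]
    · have hgt : 1 < i := by
        rcases ho with ⟨j, rfl⟩; omega
      simp [hf, bern_odd i ho hgt]
  have htot := Finset.sum_subset hs hzero
  rw [Finset.sum_insert h1ni, Finset.sum_image (fun a _ b _ h => by omega)] at htot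
  have hf1 : f 1 = -(2*n) := by
    simp [hf, _root_.bernoulli_one]; ring
  have hterm : ∀ k ∈ Icc 1 n, f (2*k)
      = (2:ℚ)^(2*k) * ((2:ℚ)^(2*k) - 1) * ((2*n).choose (2*k) : ℚ) * _root_.bernoulli (2*k) := by
    intro k _
    have : (4:ℚ)^(2*k) = (2:ℚ)^(2*k) * (2:ℚ)^(2*k) := by
      rw [show (4:ℚ) = 2*2 by norm_num, mul_pow]
    simp only [hf, this]; ring
  rw [Finset.sum_congr rfl hterm, hsum] at htot
  linarith [htot]

end Aux


open Finset

/-- The Bernoulli polynomial `B_n` evaluated at a complex number `z`,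
with generating function `t·e^{zt}/(e^t−1) = ∑_{n≥0} B_n(z)·t^n/n!`. -/
noncomputable def bernoulliPoly (n : ℕ) (z : ℂ) : ℂ :=
  Polynomial.aeval z (Polynomial.bernoulli n)

/-- The Euler polynomial `E_n` evaluated at a complex number `z`,
with generating function `2·e^{zt}/(e^t+1) = ∑_{n≥0} E_n(z)·t^n/n!`,
given by the explicit formula `E_n(z) = ∑_{k=0}^n 2^{-k} ∑_{j=0}^k (-1)^j C(k,j)(z+j)^n`. -/
noncomputable def eulerPoly (n : ℕ) (z : ℂ) : ℂ :=
  ∑ k ∈ range (n + 1), (1 / 2 ^ k : ℂ) *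
    ∑ j ∈ range (k + 1), (-1) ^ j * (k.choose j : ℂ) * (z + j) ^ n

/-- The Bernoulli number `B_n = B_n(0)`. -/
noncomputable def bernoulliNumber (n : ℕ) : ℂ := bernoulliPoly n 0

theorem stmt18 (n : ℕ) (hn : 0 < n) :
    ∑ k ∈ Icc 1 n, (2 : ℂ) ^ (2 * k) * ((2 : ℂ) ^ (2 * k) - 1) *
        ((2 * n).choose (2 * k) : ℂ) * bernoulliNumber (2 * k)
      = 2 * n := by
  have hb : ∀ m : ℕ, bernoulliNumber m = ((_root_.bernoulli m : ℚ) : ℂ) := by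
    intro m
    rw [bernoulliNumber, bernoulliPoly, Polynomial.aeval_def, Polynomial.eval₂_at_zero,
      Polynomial.coeff_zero_eq_eval_zero, Polynomial.bernoulli_eval_zero, eq_ratCast]
  have hq := ratmain n hn
  calc ∑ k ∈ Icc 1 n, (2 : ℂ) ^ (2 * k) * ((2 : ℂ) ^ (2 * k) - 1) *
        ((2 * n).choose (2 * k) : ℂ) * bernoulliNumber (2 * k)
      = ((∑ k ∈ Icc 1 n, (2:ℚ)^(2*k) * ((2:ℚ)^(2*k) - 1) *
          ((2*n).choose (2*k) : ℚ) * _root_.bernoulli (2*k) : ℚ) : ℂ) := by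
        push_cast [hb]
        rfl
    _ = ((2*n : ℚ) : ℂ) := by rw [hq]
    _ = 2*n := by push_cast; ring
end

section
/- For every positive integer n, (1/2) · (3^{2n} − 1) · B_{2n} = ∑_{k=0}^{n-1} (1 − 3^{2k-1}) · C(2n,2k) · B_{2k}, where C(n,k) denotes the binomial coefficient. -/
open Finset

namespace Stmt19Aux

open Polynomial

lemma const_of_periodic (p : ℚ[X]) (c : ℚ) (hc : c ≠ 0)
    (h : ∀ x : ℚ, p.eval (x + c) = p.eval x) : p = C (p.eval 0) := by
  have key : ∀ k : ℕ, p.eval (k * c) = p.eval 0 := by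
    intro k
    induction k with
    | zero => simp
    | succ k ih => push_cast; rw [add_mul, one_mul, h, ih]
  have h0 : p - C (p.eval 0) = 0 := by
    apply Polynomial.eq_zero_of_infinite_isRoot
    apply Set.infinite_of_injective_forall_mem (f := fun k : ℕ => (k : ℚ) * c)
    · intro a b hab
      simpa [hc] using hab
    · intro k
      simp [Polynomial.IsRoot, key k]
  linear_combination (norm := ring_nf) h0

lemma bern_symm (n : ℕ) (x : ℚ) :
    (Polynomial.bernoulli n).eval (1 - x) = (-1 : ℚ) ^ n * (Polynomial.bernoulli n).eval x := by
  set Q : ℚ[X] := (Polynomial.bernoulli (n+1)).comp (C 1 - X)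
      - C ((-1 : ℚ) ^ (n+1)) * Polynomial.bernoulli (n+1) with hQ
  have hper : ∀ y : ℚ, Q.eval (y + 1) = Q.eval y := by
    intro y
    have e1 : (1 : ℚ) - (y + 1) = -y := by ring
    have e2 : (1 : ℚ) - y = 1 + -y := by ring
    have e3 : y + 1 = 1 + y := by ring
    simp only [hQ, eval_sub, eval_comp, eval_one, eval_C, eval_mul, eval_X, e1, e2, e3,
      Polynomial.bernoulli_eval_one_add]
    have e4 : (-y) ^ n = (-1 : ℚ) ^ n * y ^ n := by rw [neg_pow]
    rw [Nat.add_sub_cancel]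
    rw [e4]
    ring
  have hconst := const_of_periodic Q 1 one_ne_zero hper
  have hd : Polynomial.derivative Q = 0 := by rw [hconst]; simp
  have hd2 : (Polynomial.derivative Q).eval x = 0 := by rw [hd]; simp
  rw [hQ] at hd2
  simp only [derivative_sub, derivative_mul, derivative_C, derivative_comp, derivative_one,
    derivative_X, Polynomial.derivative_bernoulli_add_one, zero_sub, zero_mul, zero_add,
    eval_sub, eval_mul, eval_comp, eval_neg, eval_one, eval_C, eval_natCast, eval_add, eval_X]
    at hd2
  have hn1 : ((n : ℚ) + 1) ≠ 0 := by positivity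
  have he : (-1 : ℚ) ^ (n + 1) = -(-1 : ℚ) ^ n := by ring
  rw [he] at hd2
  have hgoal : -((↑n + 1 : ℚ) * eval (1 - x) (Polynomial.bernoulli n))
      + (-1) ^ n * ((↑n + 1) * eval x (Polynomial.bernoulli n)) = 0 := by
    linear_combination hd2
  apply mul_left_cancel₀ hn1
  linear_combination -hgoal

lemma bern_mult3 (n : ℕ) (x : ℚ) :
    (3 : ℚ) ^ n * ((Polynomial.bernoulli n).eval x + (Polynomial.bernoulli n).eval (x + 1/3)
        + (Polynomial.bernoulli n).eval (x + 2/3))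
      = 3 * (Polynomial.bernoulli n).eval (3 * x) := by
  set P : ℚ[X] := C ((3 : ℚ) ^ (n+1)) * (Polynomial.bernoulli (n+1)
      + (Polynomial.bernoulli (n+1)).comp (X + C (1/3 : ℚ))
      + (Polynomial.bernoulli (n+1)).comp (X + C (2/3 : ℚ)))
      - C 3 * (Polynomial.bernoulli (n+1)).comp (C 3 * X) with hP
  have hper : ∀ y : ℚ, P.eval (y + 1/3) = P.eval y := by
    intro y
    have e1 : y + 1/3 + 2/3 = 1 + y := by ring
    have e2 : (3 : ℚ) * (y + 1/3) = 1 + 3 * y := by ring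
    simp only [hP, eval_sub, eval_mul, eval_add, eval_comp, eval_C, eval_X, e1, e2,
      Polynomial.bernoulli_eval_one_add]
    rw [Nat.add_sub_cancel]
    have e3 : (3 * y) ^ n = 3 ^ n * y ^ n := by rw [mul_pow]
    rw [e3]
    ring
  have hconst := const_of_periodic P (1/3) (by norm_num) hper
  have hd2 : (Polynomial.derivative P).eval x = 0 := by rw [hconst]; simp
  rw [hP] at hd2
  simp only [derivative_sub, derivative_mul, derivative_C, derivative_comp, derivative_add,
    derivative_X, Polynomial.derivative_bernoulli_add_one, zero_mul, zero_add, add_zero,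
    eval_sub, eval_mul, eval_comp, eval_add, eval_C, eval_X, eval_natCast, eval_one] at hd2
  have hn1 : ((n : ℚ) + 1) ≠ 0 := by positivity
  apply mul_left_cancel₀ hn1
  apply mul_left_cancel₀ (three_ne_zero (α := ℚ))
  linear_combination hd2

lemma bern_eval_sum (m : ℕ) (x : ℚ) :
    (Polynomial.bernoulli m).eval x
      = ∑ i ∈ range (m + 1), _root_.bernoulli i * (m.choose i : ℚ) * x ^ (m - i) := by
  simp [Polynomial.bernoulli, eval_finset_sum, eval_monomial]

lemma sum_even_eq (g : ℕ → ℚ) (hodd : ∀ j, Odd j → g j = 0) (n : ℕ) :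
    ∑ j ∈ range (2 * n), g j = ∑ k ∈ range n, g (2 * k) := by
  induction n with
  | zero => simp
  | succ n ih =>
    have h2 : 2 * (n + 1) = (2 * n + 1) + 1 := by ring
    rw [h2, sum_range_succ, sum_range_succ, ih, sum_range_succ,
      hodd (2 * n + 1) ⟨n, by ring⟩, add_zero]

lemma key (n : ℕ) (hn : 0 < n) :
    (1/2 : ℚ) * ((3 : ℚ) ^ (2*n) - 1) * _root_.bernoulli (2*n)
      = ∑ k ∈ range n, (1 - (3 : ℚ) ^ (2*k) / 3) * ((2*n).choose (2*k) : ℚ)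
          * _root_.bernoulli (2*k) := by
  have hodd : ∀ j, Odd j →
      (1 - (3 : ℚ) ^ j / 3) * ((2*n).choose j : ℚ) * _root_.bernoulli j = 0 := by
    intro j hj
    rcases eq_or_ne j 1 with rfl | hj1
    · norm_num
    · have hj3 : _root_.bernoulli j = 0 := by
        rw [bernoulli_eq_bernoulli'_of_ne_one hj1]
        exact bernoulli'_eq_zero_of_odd hj (by
          rcases hj with ⟨t, rfl⟩
          omega)
      rw [hj3, mul_zero]
  have hre : (∑ k ∈ range n, (1 - (3 : ℚ) ^ (2*k) / 3) * ((2*n).choose (2*k) : ℚ)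
        * _root_.bernoulli (2*k))
      = ∑ j ∈ range (2*n), (1 - (3 : ℚ) ^ j / 3) * ((2*n).choose j : ℚ)
        * _root_.bernoulli j :=
    (sum_even_eq _ hodd n).symm
  rw [hre]
  set e : ℚ := (Polynomial.bernoulli (2*n)).eval (1/3 : ℚ) with he
  -- full-range sum equalities
  have h_a := sum_range_succ
    (fun j => (1 - (3 : ℚ) ^ j / 3) * ((2*n).choose j : ℚ) * _root_.bernoulli j) (2*n)
  have h_g2n : (1 - (3 : ℚ) ^ (2*n) / 3) * ((2*n).choose (2*n) : ℚ) * _root_.bernoulli (2*n)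
      = (1 - (3 : ℚ) ^ (2*n) / 3) * _root_.bernoulli (2*n) := by
    rw [Nat.choose_self]; ring
  have hsplit : (∑ j ∈ range (2*n+1),
        (1 - (3 : ℚ) ^ j / 3) * ((2*n).choose j : ℚ) * _root_.bernoulli j)
      = (∑ j ∈ range (2*n+1), _root_.bernoulli j * ((2*n).choose j : ℚ))
        - (1/3) * ∑ j ∈ range (2*n+1),
            _root_.bernoulli j * ((2*n).choose j : ℚ) * 3 ^ j := by
    rw [mul_sum, ← sum_sub_distrib]
    exact sum_congr rfl fun j _ => by ring
  have S1 : (∑ j ∈ range (2*n+1), _root_.bernoulli j * ((2*n).choose j : ℚ))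
      = _root_.bernoulli (2*n) := by
    have h1 := bern_eval_sum (2*n) 1
    simp only [one_pow, mul_one] at h1
    rw [← h1, Polynomial.bernoulli_eval_one,
      bernoulli_eq_bernoulli'_of_ne_one (by omega)]
  have S2 : (∑ j ∈ range (2*n+1), _root_.bernoulli j * ((2*n).choose j : ℚ) * 3 ^ j)
      = (3 : ℚ) ^ (2*n) * e := by
    rw [he, bern_eval_sum, mul_sum]
    refine sum_congr rfl fun j hj => ?_
    have hjle : j ≤ 2*n := by
      have := mem_range.mp hj; omega
    have hp : (3 : ℚ) ^ (2*n) = 3 ^ j * 3 ^ (2*n - j) := by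
      rw [← pow_add]; congr 1; omega
    have h3 : ((3:ℚ) ^ (2*n - j)) ≠ 0 := by positivity
    rw [hp, one_div_pow]
    field_simp
  have hsy : (Polynomial.bernoulli (2*n)).eval (2/3 : ℚ) = e := by
    have := bern_symm (2*n) (1/3 : ℚ)
    rw [show (1 : ℚ) - 1/3 = 2/3 by norm_num] at this
    rw [this, he, pow_mul]
    norm_num
  have h3 : (3 : ℚ) ^ (2*n) * (_root_.bernoulli (2*n) + e + e) = 3 * _root_.bernoulli (2*n) := by
    have hm := bern_mult3 (2*n) 0
    rw [show (0 : ℚ) + 1/3 = 1/3 by norm_num, show (0 : ℚ) + 2/3 = 2/3 by norm_num,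
      show (3 : ℚ) * 0 = 0 by norm_num, Polynomial.bernoulli_eval_zero, hsy, ← he] at hm
    linear_combination hm
  linear_combination h_a - hsplit + h_g2n - S1 + (1/3) * S2 + (1/6) * h3

end Stmt19Aux

theorem stmt19 (n : ℕ) (hn : 0 < n) :
    (1 / 2 : ℂ) * ((3 : ℂ) ^ (2 * n) - 1) * bernoulliNumber (2 * n)
      = ∑ k ∈ range n, (1 - (3 : ℂ) ^ (2 * (k : ℤ) - 1)) *
          ((2 * n).choose (2 * k) : ℂ) * bernoulliNumber (2 * k) := by
  have hB : ∀ m : ℕ, bernoulliNumber m = ((_root_.bernoulli m : ℚ) : ℂ) := by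
    intro m
    rw [bernoulliNumber, bernoulliPoly, Polynomial.aeval_def, ← Polynomial.eval_map,
      Polynomial.eval_zero_map, Polynomial.bernoulli_eval_zero, eq_ratCast]
  have hz : ∀ k : ℕ, (3 : ℂ) ^ (2 * (k : ℤ) - 1) = (3 : ℂ) ^ (2 * k) / 3 := by
    intro k
    rw [zpow_sub₀ (by norm_num : (3:ℂ) ≠ 0), zpow_one]
    norm_num
    rw [show (2 * (k : ℤ)) = ((2 * k : ℕ) : ℤ) by push_cast; ring, zpow_natCast]
  have hkey := Stmt19Aux.key n hn
  have := congrArg (fun q : ℚ => (q : ℂ)) hkey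
  push_cast at this
  rw [hB (2*n)]
  push_cast
  rw [this]
  refine sum_congr rfl fun k _ => ?_
  rw [hB (2*k), hz k]
end
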